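/- For all x ∈ (0,1] and all y ∈ [0, 1−x], (1−y)·(1−y−x) + y·(y+x) + 2·√( (1−y)·(1−y−x)·y·(y+x) ) ≥ 1 − x. Equivalently, the uniform pairwise rate satisfies r(y, y+x) ≤ −log(1−x). -/
import Mathlib


/-- The uniform pairwise rate `r(p,q) = -2·log[√((1-p)(1-q)) + √(pq)]`. -/
noncomputable def uniRate (p q : ℝ) : ℝ :=
  -2 * Real.log (Real.sqrt ((1 - p) * (1 - q)) + Real.sqrt (p * q))

/-- **Adjacent levels at the boundary have the extreme rate.**
For `x ∈ (0,1]` and `y ∈ [0,1-x]`,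
`(1-y)(1-y-x) + y(y+x) + 2√((1-y)(1-y-x)·y·(y+x)) ≥ 1-x`; equivalently
`r(y, y+x) ≤ -log(1-x)`. -/
theorem boundary_rate_dominates
    (x y : ℝ) (hx : 0 < x) (hx1 : x ≤ 1) (hy : 0 ≤ y) (hyx : y ≤ 1 - x) :
    1 - x ≤ (1 - y) * (1 - y - x) + y * (y + x)
        + 2 * Real.sqrt ((1 - y) * (1 - y - x) * y * (y + x)) ∧
      uniRate y (y + x) ≤ -Real.log (1 - x) := by
  have ha : (0:ℝ) ≤ (1 - y) * (1 - y - x) := mul_nonneg (by linarith) (by linarith)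
  have hb : (0:ℝ) ≤ y * (y + x) := mul_nonneg hy (by linarith)
  -- key: sqrt of product ≥ y*(1-x-y)
  have hsq : y * (1 - x - y) ≤ Real.sqrt ((1 - y) * (1 - y - x) * y * (y + x)) := by
    have h1 : Real.sqrt ((y * (1 - x - y))^2) ≤
        Real.sqrt ((1 - y) * (1 - y - x) * y * (y + x)) := by
      apply Real.sqrt_le_sqrt
      nlinarith [mul_nonneg hy (show (0:ℝ) ≤ 1 - x - y by linarith)]
    rwa [Real.sqrt_sq (mul_nonneg hy (by linarith))] at h1
  have hfirst : 1 - x ≤ (1 - y) * (1 - y - x) + y * (y + x)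
      + 2 * Real.sqrt ((1 - y) * (1 - y - x) * y * (y + x)) := by nlinarith
  refine ⟨hfirst, ?_⟩
  set S : ℝ := Real.sqrt ((1 - y) * (1 - y - x)) + Real.sqrt (y * (y + x)) with hS
  have hS2 : S ^ 2 = (1 - y) * (1 - y - x) + y * (y + x)
      + 2 * Real.sqrt ((1 - y) * (1 - y - x) * y * (y + x)) := by
    have : (1 - y) * (1 - y - x) * y * (y + x) = ((1 - y) * (1 - y - x)) * (y * (y + x)) := by
      ring
    rw [hS, add_sq, Real.sq_sqrt ha, Real.sq_sqrt hb, this,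
      Real.sqrt_mul ha]
    ring
  have hSnn : 0 ≤ S := add_nonneg (Real.sqrt_nonneg _) (Real.sqrt_nonneg _)
  rcases lt_or_eq_of_le hx1 with hlt | heq
  · have h1x : (0:ℝ) < 1 - x := by linarith
    have hS2ge : 1 - x ≤ S ^ 2 := by rw [hS2]; exact hfirst
    have hSpos : 0 < S := by nlinarith
    have hlog : Real.log (1 - x) ≤ Real.log (S ^ 2) :=
      Real.log_le_log h1x hS2ge
    rw [Real.log_pow] at hlog
    have huni : uniRate y (y + x) = -2 * Real.log S := by
      unfold uniRate
      rw [show 1 - (y + x) = 1 - y - x from by ring, hS]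
    rw [huni]
    push_cast at hlog
    linarith
  · -- x = 1, so y = 0
    have hy0 : y = 0 := le_antisymm (by linarith) hy
    subst hy0
    simp [uniRate, ← heq, Real.log_zero]
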